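/- For all natural numbers n, P_n(x) + x^{n+1}·R_n(x) = (1+x)·(1+x^2)^n, where P_n(x) = Σ_{k=0}^n B(n,k)·x^{n-k}, R_n(x) = Σ_{k=0}^n B(n,k)·x^k, and B(n,k) = C(n, ⌊(n-k)/2⌋). -/

import Mathlib

open Polynomial

def B (n k : ℕ) : ℕ := Nat.choose n ((n - k) / 2)

noncomputable def P (n : ℕ) : Polynomial ℤ :=
  ∑ k ∈ Finset.range (n + 1), C ((B n k : ℤ)) * X ^ (n - k)

noncomputable def R (n : ℕ) : Polynomial ℤ :=
  ∑ k ∈ Finset.range (n + 1), C ((B n k : ℤ)) * X ^ k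

lemma sum_range_even_odd {M : Type*} [AddCommMonoid M] (f : ℕ → M) (N : ℕ) :
    ∑ m ∈ Finset.range (2 * N), f m = ∑ j ∈ Finset.range N, (f (2 * j) + f (2 * j + 1)) := by
  induction N with
  | zero => simp
  | succ N ih =>
    rw [Finset.sum_range_succ, ← ih, show 2 * (N + 1) = 2 * N + 1 + 1 by ring,
      Finset.sum_range_succ, Finset.sum_range_succ, add_assoc]

lemma P_eq (n : ℕ) :
    P n = ∑ k ∈ Finset.range (n + 1), C ((n.choose (k / 2) : ℤ)) * X ^ k := by
  rw [P, ← Finset.sum_range_reflect]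
  apply Finset.sum_congr rfl
  intro k hk
  rw [Finset.mem_range] at hk
  have hk' : k ≤ n := Nat.lt_succ_iff.mp hk
  have h1 : n + 1 - 1 - k = n - k := by omega
  have h2 : n - (n - k) = k := by omega
  rw [h1, B, h2]

lemma shift_eq (n : ℕ) :
    X ^ (n + 1) * R n
      = ∑ m ∈ Finset.Ico (n + 1) (2 * n + 2), C ((n.choose (m / 2) : ℤ)) * X ^ m := by
  rw [R, Finset.mul_sum]
  rw [Finset.sum_Ico_eq_sum_range]
  have h : 2 * n + 2 - (n + 1) = n + 1 := by omega
  rw [h]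
  apply Finset.sum_congr rfl
  intro k hk
  rw [Finset.mem_range] at hk
  have hk' : k ≤ n := Nat.lt_succ_iff.mp hk
  have h3 : n.choose ((n - k) / 2) = n.choose ((n + 1 + k) / 2) := by
    rcases Nat.even_or_odd k with ⟨j, hj⟩ | ⟨j, hj⟩
    · subst hj
      have e1 : (n - (j + j)) / 2 = ((n + 1 + (j + j)) / 2) - (2 * j) ∨
          (n - (j + j)) / 2 = n - ((n + 1 + (j + j)) / 2) := by omega
      have e2 : (n + 1 + (j + j)) / 2 ≤ n := by omega
      rcases (by omega : (n - (j + j)) / 2 = n - ((n + 1 + (j + j)) / 2)) with e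
      rw [e, Nat.choose_symm e2]
    · subst hj
      have e2 : (n + 1 + (2 * j + 1)) / 2 ≤ n := by omega
      rcases (by omega : (n - (2 * j + 1)) / 2 = n - ((n + 1 + (2 * j + 1)) / 2)) with e
      rw [e, Nat.choose_symm e2]
  rw [B, h3, pow_add]
  ring

theorem pascalian_reciprocal_identity (n : ℕ) :
    P n + X ^ (n + 1) * R n = (1 + X) * (1 + X ^ 2) ^ n := by
  rw [P_eq, shift_eq]
  rw [show Finset.range (n + 1) = Finset.Ico 0 (n + 1) by rw [Finset.range_eq_Ico]]
  rw [Finset.sum_Ico_consecutive _ (by omega) (by omega : n + 1 ≤ 2 * n + 2)]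
  rw [← Finset.range_eq_Ico, show 2 * n + 2 = 2 * (n + 1) by ring]
  rw [sum_range_even_odd (fun m => C ((n.choose (m / 2) : ℤ)) * X ^ m) (n + 1)]
  have hrhs : (1 + X : Polynomial ℤ) * (1 + X ^ 2) ^ n
      = ∑ j ∈ Finset.range (n + 1), (1 + X) * (C ((n.choose j : ℤ)) * X ^ (2 * j)) := by
    rw [← Finset.mul_sum]
    congr 1
    rw [add_comm (1 : Polynomial ℤ) (X ^ 2), add_pow]
    apply Finset.sum_congr rfl
    intro j hj
    rw [one_pow, mul_one, ← pow_mul]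
    simp [map_natCast, mul_comm]
  rw [hrhs]
  apply Finset.sum_congr rfl
  intro j hj
  have e1 : (2 * j) / 2 = j := by omega
  have e2 : (2 * j + 1) / 2 = j := by omega
  rw [e1, e2, pow_succ]
  ring
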